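/- Sequence counting lemma: let Seq₂(m,n) denote binary sequences with m ones and n twos. If k ≥ 2 and j ∈ Seq₂(km, kn) with gcd(m,n) = 1 and m + n ≥ 1, then j can be written as j = j' i j'' where i ∈ Seq₂(m,n) is a contiguous subsequence of length m + n and the concatenation j'j'' ∈ Seq₂((k-1)m, (k-1)n). (Cyclic reducibility: some window of length m+n in the sequence contains exactly m ones and n twos.) -/

import Mathlib

/-- Discrete IVT, increasing direction. -/
lemma ivt_up (g : ℕ → ℕ) (hstep : ∀ p, g (p + 1) ≤ g p + 1) (a c : ℕ) (hga : g a ≤ c) :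
    ∀ b, a ≤ b → c ≤ g b → ∃ p, a ≤ p ∧ p ≤ b ∧ g p = c := by
  intro b hab
  induction b, hab using Nat.le_induction with
  | base => intro h; exact ⟨a, le_refl a, le_refl a, le_antisymm hga h⟩
  | succ b hab ih =>
    intro h
    by_cases hb : c ≤ g b
    · obtain ⟨p, h1, h2, h3⟩ := ih hb
      exact ⟨p, h1, h2.trans (Nat.le_succ b), h3⟩
    · push_neg at hb
      have := hstep b
      exact ⟨b + 1, hab.trans (Nat.le_succ b), le_refl _, by omega⟩

/-- Discrete IVT, decreasing direction. -/
lemma ivt_down (g : ℕ → ℕ) (hstep : ∀ p, g p ≤ g (p + 1) + 1) (a c : ℕ) (hga : c ≤ g a) :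
    ∀ b, a ≤ b → g b ≤ c → ∃ p, a ≤ p ∧ p ≤ b ∧ g p = c := by
  intro b hab
  induction b, hab using Nat.le_induction with
  | base => intro h; exact ⟨a, le_refl a, le_refl a, le_antisymm h hga⟩
  | succ b hab ih =>
    intro h
    by_cases hb : g b ≤ c
    · obtain ⟨p, h1, h2, h3⟩ := ih hb
      exact ⟨p, h1, h2.trans (Nat.le_succ b), h3⟩
    · push_neg at hb
      have := hstep b
      exact ⟨b + 1, hab.trans (Nat.le_succ b), le_refl _, by omega⟩

lemma count_true_add_count_false (l : List Bool) :
    l.count true + l.count false = l.length := by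
  induction l with
  | nil => simp
  | cons a l ih =>
    rcases a <;> simp [List.count_cons] <;> omega

/-- Cyclic reducibility of binary sequences: a sequence with km ones and kn twos (k ≥ 2,
gcd(m,n) = 1, m + n ≥ 1) contains a contiguous window with exactly m ones and n twos,
whose removal leaves a sequence with (k-1)m ones and (k-1)n twos. Ones are encoded by
`true` and twos by `false`. -/
theorem stmt_19 (m n k : ℕ) (hk : 2 ≤ k) (hcop : Nat.Coprime m n) (hmn : 1 ≤ m + n)
    (j : List Bool) (h1 : j.count true = k * m) (h2 : j.count false = k * n) :
    ∃ j' i j'' : List Bool, j = j' ++ i ++ j'' ∧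
      i.count true = m ∧ i.count false = n ∧
      (j' ++ j'').count true = (k - 1) * m ∧ (j' ++ j'').count false = (k - 1) * n := by
  set w := m + n with hw
  have hlen : j.length = k * w := by
    have := count_true_add_count_false j
    rw [h1, h2] at this
    rw [← this, hw, Nat.mul_add]
  -- F p = count of trues among the first p elements
  set F : ℕ → ℕ := fun p => ((j.take p).count true) with hF
  set C : ℕ → ℕ := fun p => (((j.drop p).take w).count true) with hC
  have hkey : ∀ p, F (p + w) = F p + C p := by
    intro p
    simp only [hF, hC]
    rw [List.take_add, List.count_append]
  have hFstep : ∀ p, F p ≤ F (p + 1) ∧ F (p + 1) ≤ F p + 1 := by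
    intro p
    simp only [hF]
    rw [List.take_add, List.count_append]
    constructor
    · exact Nat.le_add_right _ _
    · have h1 : ((j.drop p).take 1).count true ≤ ((j.drop p).take 1).length :=
        List.count_le_length
      have h2 : ((j.drop p).take 1).length ≤ 1 := List.length_take_le _ _
      omega
  have hCstep : ∀ p, C (p + 1) ≤ C p + 1 ∧ C p ≤ C (p + 1) + 1 := by
    intro p
    have e1 := hkey p
    have e2 := hkey (p + 1)
    have s1 := hFstep p
    have s2 := hFstep (p + w)
    have : p + 1 + w = p + w + 1 := by ring
    rw [this] at e2
    omega
  -- F (t * w) = sum of C over the first t disjoint windows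
  have hsum : ∀ t, F (t * w) = ∑ s ∈ Finset.range t, C (s * w) := by
    intro t
    induction t with
    | zero => simp [hF]
    | succ t ih =>
      rw [Finset.sum_range_succ, ← ih, Nat.succ_mul, hkey]
  have hFtotal : F (k * w) = k * m := by
    simp only [hF]
    rw [List.take_of_length_le (by omega), h1]
  have hSum : ∑ s ∈ Finset.range k, C (s * w) = k * m := by
    rw [← hsum, hFtotal]
  have hkpos : 0 < k := by omega
  -- there is a window with count ≤ m and one with count ≥ m
  have hex_le : ∃ t < k, C (t * w) ≤ m := by
    by_contra hcon
    push_neg at hcon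
    have : k * (m + 1) ≤ ∑ s ∈ Finset.range k, C (s * w) := by
      calc k * (m + 1) = ∑ _s ∈ Finset.range k, (m + 1) := by
            rw [Finset.sum_const, Finset.card_range, smul_eq_mul]
        _ ≤ _ := Finset.sum_le_sum (fun s hs => hcon s (Finset.mem_range.mp hs))
    rw [hSum] at this
    nlinarith
  have hex_ge : ∃ t < k, m ≤ C (t * w) := by
    by_contra hcon
    push_neg at hcon
    have : ∑ s ∈ Finset.range k, C (s * w) + k ≤ k * m := by
      calc ∑ s ∈ Finset.range k, C (s * w) + k
          = ∑ s ∈ Finset.range k, (C (s * w) + 1) := by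
            rw [Finset.sum_add_distrib, Finset.sum_const, Finset.card_range, smul_eq_mul,
              mul_one]
        _ ≤ ∑ _s ∈ Finset.range k, m := Finset.sum_le_sum
            (fun s hs => hcon s (Finset.mem_range.mp hs))
        _ = k * m := by rw [Finset.sum_const, Finset.card_range, smul_eq_mul]
    omega
  obtain ⟨t1, ht1k, ht1⟩ := hex_le
  obtain ⟨t2, ht2k, ht2⟩ := hex_ge
  -- get a window with count exactly m
  have hexact : ∃ p, p ≤ (k - 1) * w ∧ C p = m := by
    rcases le_total t1 t2 with hle | hle
    · obtain ⟨p, hp1, hp2, hp3⟩ := ivt_up C (fun p => (hCstep p).1) (t1 * w) m ht1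
        (t2 * w) (Nat.mul_le_mul_right w hle) ht2
      exact ⟨p, hp2.trans (Nat.mul_le_mul_right w (by omega)), hp3⟩
    · obtain ⟨p, hp1, hp2, hp3⟩ := ivt_down C (fun p => (hCstep p).2) (t2 * w) m ht2
        (t1 * w) (Nat.mul_le_mul_right w hle) ht1
      exact ⟨p, hp2.trans (Nat.mul_le_mul_right w (by omega)), hp3⟩
  obtain ⟨p, hpk, hCp⟩ := hexact
  have hCp' : ((j.drop p).take w).count true = m := hCp
  have hwk : w ≤ k * w := Nat.le_mul_of_pos_left w hkpos
  refine ⟨j.take p, (j.drop p).take w, (j.drop p).drop w, ?_, ?_, ?_, ?_, ?_⟩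
  · rw [List.append_assoc, List.take_append_drop, List.take_append_drop]
  · exact hCp
  · -- count false of the window
    have hplew : p + w ≤ k * w := by
      have : (k - 1) * w + w = k * w := by
        rw [Nat.sub_one_mul]; omega
      omega
    have hilen : ((j.drop p).take w).length = w := by
      rw [List.length_take, List.length_drop, hlen]
      omega
    have := count_true_add_count_false ((j.drop p).take w)
    rw [hilen, hCp'] at this
    omega
  · -- count true of the remainder
    have hdecomp : j = j.take p ++ ((j.drop p).take w ++ (j.drop p).drop w) := by
      rw [List.take_append_drop, List.take_append_drop]
    have hcnt : j.count true = (j.take p).count true + (((j.drop p).take w).count true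
        + ((j.drop p).drop w).count true) := by
      conv_lhs => rw [hdecomp]
      rw [List.count_append, List.count_append]
    rw [List.count_append]
    rw [h1, hCp'] at hcnt
    rw [Nat.sub_one_mul]
    omega
  · -- count false of the remainder
    have hplew : p + w ≤ k * w := by
      have : (k - 1) * w + w = k * w := by
        rw [Nat.sub_one_mul]; omega
      omega
    have hilen : ((j.drop p).take w).length = w := by
      rw [List.length_take, List.length_drop, hlen]
      omega
    have hif : ((j.drop p).take w).count false = n := by
      have := count_true_add_count_false ((j.drop p).take w)
      rw [hilen, hCp'] at this
      omega
    have hdecomp : j = j.take p ++ ((j.drop p).take w ++ (j.drop p).drop w) := by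
      rw [List.take_append_drop, List.take_append_drop]
    have hcnt : j.count false = (j.take p).count false + (((j.drop p).take w).count false
        + ((j.drop p).drop w).count false) := by
      conv_lhs => rw [hdecomp]
      rw [List.count_append, List.count_append]
    rw [List.count_append]
    rw [h2, hif] at hcnt
    rw [Nat.sub_one_mul]
    omega
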